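/- Assume g̃(m) ≠ 0 for every integer m. Then for all ℓ, k ∈ ℕ one has |ℓ,k⟩ = Σ_{n=0}^ℓ ((−η)^n / n!) · ∏_{j=1}^n [e_{ℓ−j+1} f^(2)_{k+j−1} / g̃((k+n)−(ℓ−n)−j)] · ṽ_{ℓ−n, k+n}, where ṽ_{ℓ,k} := Σ_{n=0}^ℓ M̃^{k,ℓ}_n |ℓ−n, k+n⟩. In other words, this formula inverts the change of basis |ℓ,k⟩ ↦ ṽ_{ℓ,k}. -/

import Mathlib

/-- The basis vector `|ℓ,k⟩` of the space of finitely supported functions `ℕ × ℕ → ℂ`. -/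
noncomputable def ket (p : ℕ × ℕ) : (ℕ × ℕ) →₀ ℂ := Finsupp.single p 1

/-- The coefficient `M̃^{k,ℓ}_n = (η^n/n!) ∏_{j=1}^n e_{ℓ−j+1} f^(2)_{k+j−1} / g̃(k−ℓ+j)`,
where `e_m = m`, `f^(2)_m = 2λ₂ − m` and `g̃(x) = δ₂ − δ₁ + η(λ₁ − λ₂ + x)`. -/
noncomputable def Mtcoef (lam1 lam2 del1 del2 eta : ℂ) (k l n : ℕ) : ℂ :=
  (eta ^ n / (n.factorial : ℂ)) *
    ∏ j ∈ Finset.Icc 1 n,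
      ((l : ℂ) - (j : ℂ) + 1) * (2 * lam2 - ((k : ℂ) + (j : ℂ) - 1)) /
        (del2 - del1 + eta * (lam1 - lam2 + ((k : ℂ) - (l : ℂ) + (j : ℂ))))

/-- The vector `ṽ_{ℓ,k} = Σ_{n=0}^ℓ M̃^{k,ℓ}_n |ℓ−n, k+n⟩`. -/
noncomputable def vA (lam1 lam2 del1 del2 eta : ℂ) (l k : ℕ) : (ℕ × ℕ) →₀ ℂ :=
  ∑ n ∈ Finset.range (l + 1), Mtcoef lam1 lam2 del1 del2 eta k l n • ket (l - n, k + n)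



lemma alt_sum (s : ℕ) (hs : s ≠ 0) :
    ∑ i ∈ Finset.range (s + 1), (-1 : ℂ) ^ i / ((i.factorial : ℂ) * ((s - i).factorial : ℂ)) = 0 := by
  have h := Int.alternating_sum_range_choose (n := s)
  have h2 : ∑ i ∈ Finset.range (s + 1), (-1 : ℂ) ^ i * (s.choose i : ℂ) = 0 := by
    have := congrArg (Int.cast : ℤ → ℂ) h
    push_cast at this
    simpa [hs] using this
  have h3 : ∀ i ∈ Finset.range (s + 1),
      (-1 : ℂ) ^ i / ((i.factorial : ℂ) * ((s - i).factorial : ℂ))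
        = ((s.factorial : ℂ))⁻¹ * ((-1) ^ i * (s.choose i : ℂ)) := by
    intro i hi
    have hle : i ≤ s := Nat.lt_succ_iff.mp (Finset.mem_range.mp hi)
    have hch := Nat.choose_mul_factorial_mul_factorial hle
    have h1 : ((i.factorial : ℂ)) ≠ 0 := Nat.cast_ne_zero.2 i.factorial_ne_zero
    have h2' : (((s - i).factorial : ℂ)) ≠ 0 := Nat.cast_ne_zero.2 (s - i).factorial_ne_zero
    have h3' : ((s.factorial : ℂ)) ≠ 0 := Nat.cast_ne_zero.2 s.factorial_ne_zero
    field_simp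
    rw [← hch]
    push_cast
    ring
  rw [Finset.sum_congr rfl h3, ← Finset.mul_sum, h2, mul_zero]

lemma PF (eta : ℂ) (heta : eta ≠ 0) (H : ℕ → ℂ) (hH : ∀ m, H m ≠ 0)
    (hP : ∀ p : ℕ, H p = H 0 + p * eta) (a s : ℕ) :
    (∏ m ∈ Finset.Icc a (a + s), H m)⁻¹
      = (eta⁻¹) ^ s * ∑ i ∈ Finset.range (s + 1),
          (-1 : ℂ) ^ i / ((i.factorial : ℂ) * ((s - i).factorial : ℂ)) * (H (a + i))⁻¹ := by
  induction s with
  | zero => simp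
  | succ s ih =>
    have hfac : ∀ t : ℕ, ((t.factorial : ℂ)) ≠ 0 := fun t => Nat.cast_ne_zero.2 t.factorial_ne_zero
    rw [show a + (s + 1) = (a + s) + 1 by ring,
      Finset.prod_Icc_succ_top (by omega) H, mul_inv, ih]
    have gen : ∀ (i : ℕ) (u f g X Y : ℂ), u ≠ 0 → f ≠ 0 → g ≠ 0 →
        (-1 : ℂ) ^ i / (f * g) * ((u * eta)⁻¹ * (X - Y))
          = eta⁻¹ * ((-1 : ℂ) ^ i / (f * (u * g)) * X + -((-1 : ℂ) ^ i / (f * (u * g))) * Y) := by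
      intro i u f g X Y hu hf hgne
      field_simp
      ring
    have key : ∀ i ∈ Finset.range (s + 1),
        (-1 : ℂ) ^ i / ((i.factorial : ℂ) * ((s - i).factorial : ℂ)) * (H (a + i))⁻¹
          * (H (a + s + 1))⁻¹
        = eta⁻¹ * ((-1 : ℂ) ^ i / ((i.factorial : ℂ) * (((s + 1) - i).factorial : ℂ)) * (H (a + i))⁻¹
            + -((-1 : ℂ) ^ i / ((i.factorial : ℂ) * (((s + 1) - i).factorial : ℂ))) * (H (a + (s + 1)))⁻¹) := by
      intro i hi
      have hle : i ≤ s := Nat.lt_succ_iff.mp (Finset.mem_range.mp hi)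
      have hdiff : H (a + s + 1) - H (a + i) = ((s + 1 - i : ℕ) : ℂ) * eta := by
        rw [hP (a + s + 1), hP (a + i)]
        push_cast [Nat.cast_sub (by omega : i ≤ s + 1)]
        ring
      have hfact : (((s + 1) - i).factorial : ℂ) = ((s + 1 - i : ℕ) : ℂ) * (((s - i).factorial : ℂ)) := by
        rw [show s + 1 - i = (s - i) + 1 by omega, Nat.factorial_succ]
        push_cast [Nat.cast_sub (by omega : i ≤ s + 1), Nat.cast_sub hle]
        ring
      have hne : ((s + 1 - i : ℕ) : ℂ) ≠ 0 := by
        simp only [ne_eq, Nat.cast_eq_zero]; omega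
      have h1 := hH (a + i)
      have h2 := hH (a + s + 1)
      have hsplit : (H (a + i))⁻¹ * (H (a + s + 1))⁻¹
          = (((s + 1 - i : ℕ) : ℂ) * eta)⁻¹ * ((H (a + i))⁻¹ - (H (a + s + 1))⁻¹) := by
        have hd : H (a + s + 1) - H (a + i) ≠ 0 := by rw [hdiff]; exact mul_ne_zero hne heta
        rw [← hdiff, inv_sub_inv h1 h2, ← mul_div_assoc, inv_mul_cancel₀ hd, one_div, mul_inv]
      rw [show a + (s + 1) = a + s + 1 by ring, hfact, mul_assoc, hsplit]
      exact gen i _ _ _ _ _ hne (hfac i) (hfac (s - i))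
    rw [mul_assoc, Finset.sum_mul, Finset.sum_congr rfl key]
    have halt := alt_sum (s + 1) (by omega)
    rw [Finset.sum_range_succ] at halt
    rw [Finset.sum_range_succ
      (f := fun i => (-1 : ℂ) ^ i / ((i.factorial : ℂ) * (((s + 1) - i).factorial : ℂ)) * (H (a + i))⁻¹)]
    simp only [Finset.sum_add_distrib, ← Finset.mul_sum, ← Finset.sum_mul]
    rw [eq_neg_of_add_eq_zero_right halt]
    simp only [Finset.sum_neg_distrib]
    ring

lemma CORE (eta : ℂ) (heta : eta ≠ 0) (H : ℕ → ℂ) (hH : ∀ m, H m ≠ 0)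
    (hP : ∀ p : ℕ, H p = H 0 + p * eta) (s : ℕ) (hs : s ≠ 0) :
    ∑ n ∈ Finset.range (s + 1),
      (-1 : ℂ) ^ n / ((n.factorial : ℂ) * ((s - n).factorial : ℂ)) * H (2 * n)
        * (∏ m ∈ Finset.Icc n (n + s), H m)⁻¹ = 0 := by
  have step1 : ∀ n ∈ Finset.range (s + 1),
      (-1 : ℂ) ^ n / ((n.factorial : ℂ) * ((s - n).factorial : ℂ)) * H (2 * n)
        * (∏ m ∈ Finset.Icc n (n + s), H m)⁻¹
      = (eta⁻¹) ^ s * ∑ i ∈ Finset.range (s + 1),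
          ((-1 : ℂ) ^ n / ((n.factorial : ℂ) * ((s - n).factorial : ℂ))
            * ((-1 : ℂ) ^ i / ((i.factorial : ℂ) * ((s - i).factorial : ℂ)))
            + eta * (((n : ℂ) - i)
              * ((-1 : ℂ) ^ n / ((n.factorial : ℂ) * ((s - n).factorial : ℂ)))
              * ((-1 : ℂ) ^ i / ((i.factorial : ℂ) * ((s - i).factorial : ℂ)))
              * (H (n + i))⁻¹)) := by
    intro n hn
    rw [PF eta heta H hH hP n s, show
        (-1 : ℂ) ^ n / ((n.factorial : ℂ) * ((s - n).factorial : ℂ)) * H (2 * n)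
          * ((eta⁻¹) ^ s * ∑ i ∈ Finset.range (s + 1),
            (-1 : ℂ) ^ i / ((i.factorial : ℂ) * ((s - i).factorial : ℂ)) * (H (n + i))⁻¹)
        = (eta⁻¹) ^ s * ∑ i ∈ Finset.range (s + 1),
            (-1 : ℂ) ^ n / ((n.factorial : ℂ) * ((s - n).factorial : ℂ)) * H (2 * n)
              * ((-1 : ℂ) ^ i / ((i.factorial : ℂ) * ((s - i).factorial : ℂ)) * (H (n + i))⁻¹)
        from by rw [mul_left_comm, Finset.mul_sum]]
    rw [Finset.sum_congr rfl (fun i hi => ?_)]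
    have hex : H (2 * n) = H (n + i) + ((n : ℂ) - i) * eta := by
      rw [hP (2 * n), hP (n + i)]; push_cast; ring
    have hnz := hH (n + i)
    rw [hex]
    have hx : (H (n + i) + ((n : ℂ) - i) * eta) * (H (n + i))⁻¹
        = 1 + ((n : ℂ) - i) * eta * (H (n + i))⁻¹ := by
      field_simp
    linear_combination ((-1 : ℂ) ^ n / ((n.factorial : ℂ) * ((s - n).factorial : ℂ))
      * ((-1 : ℂ) ^ i / ((i.factorial : ℂ) * ((s - i).factorial : ℂ)))) * hx
  rw [Finset.sum_congr rfl step1, ← Finset.mul_sum]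
  have hsplit : ∑ n ∈ Finset.range (s + 1), ∑ i ∈ Finset.range (s + 1),
      ((-1 : ℂ) ^ n / ((n.factorial : ℂ) * ((s - n).factorial : ℂ))
        * ((-1 : ℂ) ^ i / ((i.factorial : ℂ) * ((s - i).factorial : ℂ)))
        + eta * (((n : ℂ) - i)
          * ((-1 : ℂ) ^ n / ((n.factorial : ℂ) * ((s - n).factorial : ℂ)))
          * ((-1 : ℂ) ^ i / ((i.factorial : ℂ) * ((s - i).factorial : ℂ)))
          * (H (n + i))⁻¹)) = 0 := by
    simp only [Finset.sum_add_distrib]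
    have hA : ∑ n ∈ Finset.range (s + 1), ∑ i ∈ Finset.range (s + 1),
        (-1 : ℂ) ^ n / ((n.factorial : ℂ) * ((s - n).factorial : ℂ))
          * ((-1 : ℂ) ^ i / ((i.factorial : ℂ) * ((s - i).factorial : ℂ))) = 0 := by
      rw [← Finset.sum_mul_sum, alt_sum s hs, zero_mul]
    have hB : ∑ n ∈ Finset.range (s + 1), ∑ i ∈ Finset.range (s + 1),
        eta * (((n : ℂ) - i)
          * ((-1 : ℂ) ^ n / ((n.factorial : ℂ) * ((s - n).factorial : ℂ)))
          * ((-1 : ℂ) ^ i / ((i.factorial : ℂ) * ((s - i).factorial : ℂ)))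
          * (H (n + i))⁻¹) = 0 := by
      set F : ℕ → ℕ → ℂ := fun n i => eta * (((n : ℂ) - i)
          * ((-1 : ℂ) ^ n / ((n.factorial : ℂ) * ((s - n).factorial : ℂ)))
          * ((-1 : ℂ) ^ i / ((i.factorial : ℂ) * ((s - i).factorial : ℂ)))
          * (H (n + i))⁻¹) with hF
      have hanti : ∀ n i : ℕ, F i n = -F n i := by
        intro n i
        simp only [hF]
        rw [show i + n = n + i by ring]
        ring
      have hcomm : ∑ n ∈ Finset.range (s + 1), ∑ i ∈ Finset.range (s + 1), F n i
          = ∑ n ∈ Finset.range (s + 1), ∑ i ∈ Finset.range (s + 1), F i n := Finset.sum_comm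
      have : ∑ n ∈ Finset.range (s + 1), ∑ i ∈ Finset.range (s + 1), F n i
          = -∑ n ∈ Finset.range (s + 1), ∑ i ∈ Finset.range (s + 1), F n i := by
        nth_rewrite 1 [hcomm]
        rw [Finset.sum_congr rfl (fun n _ => Finset.sum_congr rfl (fun i _ => hanti n i))]
        simp only [Finset.sum_neg_distrib]
      have h2 : (∑ n ∈ Finset.range (s + 1), ∑ i ∈ Finset.range (s + 1), F n i)
          + ∑ n ∈ Finset.range (s + 1), ∑ i ∈ Finset.range (s + 1), F n i = 0 := by
        linear_combination this
      exact add_self_eq_zero.mp h2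
    rw [hA, hB, add_zero]
  rw [hsplit, mul_zero]

lemma prodIcc1 (n : ℕ) (f : ℕ → ℂ) :
    ∏ j ∈ Finset.Icc 1 n, f j = ∏ i ∈ Finset.range n, f (1 + i) := by
  rw [← Finset.Ico_add_one_right_eq_Icc, Finset.prod_Ico_eq_prod_range]; simp

lemma KEYgen (eta : ℂ) (heta : eta ≠ 0) (H : ℕ → ℂ) (hH : ∀ m, H m ≠ 0)
    (hP : ∀ p : ℕ, H p = H 0 + p * eta) (a : ℕ → ℂ) (s : ℕ) (hs : s ≠ 0) :
    ∑ n ∈ Finset.range (s + 1),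
      ((-eta) ^ n / (n.factorial : ℂ) * ∏ j ∈ Finset.Icc 1 n, a j / H (2 * n - j))
        * (eta ^ (s - n) / ((s - n).factorial : ℂ)
            * ∏ j ∈ Finset.Icc 1 (s - n), a (n + j) / H (2 * n + j)) = 0 := by
  have hfac : ∀ t : ℕ, ((t.factorial : ℂ)) ≠ 0 := fun t => Nat.cast_ne_zero.2 t.factorial_ne_zero
  have step : ∀ n ∈ Finset.range (s + 1),
      ((-eta) ^ n / (n.factorial : ℂ) * ∏ j ∈ Finset.Icc 1 n, a j / H (2 * n - j))
        * (eta ^ (s - n) / ((s - n).factorial : ℂ)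
            * ∏ j ∈ Finset.Icc 1 (s - n), a (n + j) / H (2 * n + j))
      = (eta ^ s * ∏ j ∈ Finset.Icc 1 s, a j)
        * ((-1 : ℂ) ^ n / ((n.factorial : ℂ) * ((s - n).factorial : ℂ)) * H (2 * n)
            * (∏ m ∈ Finset.Icc n (n + s), H m)⁻¹) := by
    intro n hn
    have hns : n ≤ s := Nat.lt_succ_iff.mp (Finset.mem_range.mp hn)
    -- numerator identity
    have hnum : (∏ j ∈ Finset.Icc 1 n, a j) * ∏ j ∈ Finset.Icc 1 (s - n), a (n + j)
        = ∏ j ∈ Finset.Icc 1 s, a j := by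
      have hr : ∏ x ∈ Finset.range s, a (1 + x)
          = (∏ x ∈ Finset.range n, a (1 + x)) * ∏ x ∈ Finset.range (s - n), a (1 + (n + x)) := by
        rw [← Finset.prod_range_add, show n + (s - n) = s by omega]
      rw [prodIcc1, prodIcc1, prodIcc1, hr]
      congr 1
      exact Finset.prod_congr rfl fun x _ => by congr 1; omega
    -- denominator identity
    have hden : (∏ j ∈ Finset.Icc 1 n, H (2 * n - j))
        * (H (2 * n) * ∏ j ∈ Finset.Icc 1 (s - n), H (2 * n + j))
        = ∏ m ∈ Finset.Icc n (n + s), H m := by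
      have hR : ∏ m ∈ Finset.Icc n (n + s), H m = ∏ x ∈ Finset.range (s + 1), H (n + x) := by
        rw [← Finset.Ico_add_one_right_eq_Icc, Finset.prod_Ico_eq_prod_range,
          show n + s + 1 - n = s + 1 by omega]
      have hsplit : ∏ x ∈ Finset.range (s + 1), H (n + x)
          = (∏ x ∈ Finset.range n, H (n + x)) * ∏ x ∈ Finset.range (s - n + 1), H (n + (n + x)) := by
        rw [show s + 1 = n + (s - n + 1) by omega, Finset.prod_range_add (fun x => H (n + x))]
      have h1 : ∏ j ∈ Finset.Icc 1 n, H (2 * n - j) = ∏ x ∈ Finset.range n, H (n + x) := by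
        rw [prodIcc1]
        rw [← Finset.prod_range_reflect (fun x => H (n + x)) n]
        exact Finset.prod_congr rfl fun x hx => by
          have := Finset.mem_range.mp hx
          congr 1
          omega
      have h2 : ∏ x ∈ Finset.range (s - n + 1), H (n + (n + x))
          = H (2 * n) * ∏ j ∈ Finset.Icc 1 (s - n), H (2 * n + j) := by
        rw [Finset.prod_range_succ' (fun x => H (n + (n + x)))]
        rw [prodIcc1]
        rw [show H (n + (n + 0)) = H (2 * n) by congr 1; omega]
        rw [mul_comm]
        congr 1
        exact Finset.prod_congr rfl fun x _ => by congr 1; omega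
      rw [h1, hR, hsplit, h2]
    -- put together
    rw [Finset.prod_div_distrib, Finset.prod_div_distrib, ← hnum, ← hden]
    have hQ1 : (∏ j ∈ Finset.Icc 1 n, H (2 * n - j)) ≠ 0 :=
      Finset.prod_ne_zero_iff.mpr fun j _ => hH _
    have hQ2 : (∏ j ∈ Finset.Icc 1 (s - n), H (2 * n + j)) ≠ 0 :=
      Finset.prod_ne_zero_iff.mpr fun j _ => hH _
    have hX : H (2 * n) ≠ 0 := hH _
    have hpow : eta ^ s = eta ^ n * eta ^ (s - n) := by
      rw [← pow_add]; congr 1; omega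
    have gen : ∀ (P1 P2 Q1 Q2 X f g : ℂ), Q1 ≠ 0 → Q2 ≠ 0 → X ≠ 0 → f ≠ 0 → g ≠ 0 →
        ((-1 : ℂ) ^ n * eta ^ n / f * (P1 / Q1)) * (eta ^ (s - n) / g * (P2 / Q2))
          = eta ^ n * eta ^ (s - n) * (P1 * P2)
              * ((-1 : ℂ) ^ n / (f * g) * X * (Q1 * (X * Q2))⁻¹) := by
      intro P1 P2 Q1 Q2 X f g h1 h2 h3 h4 h5
      field_simp
    rw [hpow, neg_pow]
    exact gen _ _ _ _ _ _ _ hQ1 hQ2 hX (hfac n) (hfac (s - n))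
  rw [Finset.sum_congr rfl step, ← Finset.mul_sum, CORE eta heta H hH hP s hs, mul_zero]

lemma tri {M : Type*} [AddCommMonoid M] (l : ℕ) (g : ℕ → ℕ → M) :
    ∑ n ∈ Finset.range (l + 1), ∑ m ∈ Finset.range (l - n + 1), g n (n + m)
      = ∑ s ∈ Finset.range (l + 1), ∑ n ∈ Finset.range (s + 1), g n s := by
  rw [Finset.sum_sigma', Finset.sum_sigma']
  refine Finset.sum_nbij' (fun p => ⟨p.1 + p.2, p.1⟩) (fun p => ⟨p.2, p.1 - p.2⟩)
    ?_ ?_ ?_ ?_ ?_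
  · rintro ⟨n, m⟩ h
    simp only [Finset.mem_sigma, Finset.mem_range] at h ⊢
    omega
  · rintro ⟨s, n⟩ h
    simp only [Finset.mem_sigma, Finset.mem_range] at h ⊢
    omega
  · rintro ⟨n, m⟩ h
    simp [Nat.add_sub_cancel_left]
  · rintro ⟨s, n⟩ h
    simp only [Finset.mem_sigma, Finset.mem_range] at h
    simp only [Sigma.mk.inj_iff, heq_eq_eq, and_true]
    omega
  · rintro ⟨n, m⟩ h
    rfl

lemma general_inverse (l k : ℕ) (C : ℕ → ℂ)
    (Mt : ℕ → ℕ → ℂ)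
    (hconv : ∀ s, s ≤ l → ∑ n ∈ Finset.range (s + 1), C n * Mt n (s - n)
      = if s = 0 then 1 else 0) :
    ∑ n ∈ Finset.range (l + 1), ∑ m ∈ Finset.range (l - n + 1),
      (C n * Mt n m) • ket (l - n - m, k + n + m) = ket (l, k) := by
  have h1 : ∑ n ∈ Finset.range (l + 1), ∑ m ∈ Finset.range (l - n + 1),
      (C n * Mt n m) • ket (l - n - m, k + n + m)
      = ∑ s ∈ Finset.range (l + 1), ∑ n ∈ Finset.range (s + 1),
          (C n * Mt n (s - n)) • ket (l - s, k + s) := by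
    rw [← tri l (fun n s => (C n * Mt n (s - n)) • ket (l - s, k + s))]
    refine Finset.sum_congr rfl fun n hn => Finset.sum_congr rfl fun m hm => ?_
    simp only [Nat.add_sub_cancel_left, Nat.sub_sub, add_assoc]
  rw [h1]
  have h2 : ∀ s ∈ Finset.range (l + 1),
      ∑ n ∈ Finset.range (s + 1), (C n * Mt n (s - n)) • ket (l - s, k + s)
        = (if s = 0 then (1 : ℂ) else 0) • ket (l - s, k + s) := by
    intro s hs
    rw [← Finset.sum_smul, hconv s (Nat.lt_succ_iff.mp (Finset.mem_range.mp hs))]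
  rw [Finset.sum_congr rfl h2]
  rw [Finset.sum_eq_single 0]
  · simp
  · intro b _ hb
    rw [if_neg hb, zero_smul]
  · intro h
    exact absurd (Finset.mem_range.mpr (by omega)) h

lemma KEY (lam1 lam2 del1 del2 eta : ℂ) (heta : eta ≠ 0)
    (hg : ∀ m : ℤ, del2 - del1 + eta * (lam1 - lam2 + (m : ℂ)) ≠ 0) (l k s : ℕ)
    (hsl : s ≤ l) :
    ∑ n ∈ Finset.range (s + 1),
      (((-eta) ^ n / (n.factorial : ℂ)) *
          ∏ j ∈ Finset.Icc 1 n,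
            ((l : ℂ) - (j : ℂ) + 1) * (2 * lam2 - ((k : ℂ) + (j : ℂ) - 1)) /
              (del2 - del1 + eta * (lam1 - lam2 +
                (((k : ℂ) + (n : ℂ)) - ((l : ℂ) - (n : ℂ)) - (j : ℂ)))))
        * Mtcoef lam1 lam2 del1 del2 eta (k + n) (l - n) (s - n)
      = if s = 0 then 1 else 0 := by
  by_cases hs : s = 0
  · subst hs
    norm_num [Mtcoef]
  · rw [if_neg hs]
    set H : ℕ → ℂ := fun m =>
      del2 - del1 + eta * (lam1 - lam2 + ((k : ℂ) - (l : ℂ) + (m : ℂ))) with hHdef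
    have hH : ∀ m, H m ≠ 0 := by
      intro m
      have := hg ((k : ℤ) - (l : ℤ) + (m : ℤ))
      simp only [hHdef]
      push_cast at this
      convert this using 3
    have hP : ∀ p : ℕ, H p = H 0 + p * eta := by
      intro p
      simp only [hHdef]
      push_cast
      ring
    set a : ℕ → ℂ := fun j => ((l : ℂ) - (j : ℂ) + 1) * (2 * lam2 - ((k : ℂ) + (j : ℂ) - 1))
      with hadef
    rw [← KEYgen eta heta H hH hP a s hs]
    refine Finset.sum_congr rfl fun n hn => ?_
    have hns : n ≤ s := Nat.lt_succ_iff.mp (Finset.mem_range.mp hn)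
    have hnl : n ≤ l := le_trans hns hsl
    congr 1
    · -- N coefficient
      congr 1
      refine Finset.prod_congr rfl fun j hj => ?_
      have hj' : 1 ≤ j ∧ j ≤ n := by simpa using Finset.mem_Icc.mp hj
      congr 1
      simp only [hHdef]
      push_cast [Nat.cast_sub (by omega : j ≤ 2 * n)]
      ring
    · -- Mtcoef
      rw [Mtcoef]
      congr 1
      refine Finset.prod_congr rfl fun j hj => ?_
      simp only [hadef, hHdef]
      push_cast [Nat.cast_sub hnl]
      ring


/-- inverse change of basis:
`|ℓ,k⟩ = Σ_{n=0}^ℓ ((−η)^n/n!) ∏_{j=1}^n [e_{ℓ−j+1} f^(2)_{k+j−1} / g̃((k+n)−(ℓ−n)−j)] ṽ_{ℓ−n,k+n}`. -/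
theorem ket_eq_sum_vA (lam1 lam2 del1 del2 eta : ℂ) (heta : eta ≠ 0)
    (hg : ∀ m : ℤ, del2 - del1 + eta * (lam1 - lam2 + (m : ℂ)) ≠ 0) (l k : ℕ) :
    ket (l, k) =
      ∑ n ∈ Finset.range (l + 1),
        (((-eta) ^ n / (n.factorial : ℂ)) *
            ∏ j ∈ Finset.Icc 1 n,
              ((l : ℂ) - (j : ℂ) + 1) * (2 * lam2 - ((k : ℂ) + (j : ℂ) - 1)) /
                (del2 - del1 + eta * (lam1 - lam2 +
                  (((k : ℂ) + (n : ℂ)) - ((l : ℂ) - (n : ℂ)) - (j : ℂ))))) •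
          vA lam1 lam2 del1 del2 eta (l - n) (k + n) := by
  simp only [vA, Finset.smul_sum, smul_smul]
  exact (general_inverse l k
    (fun n => ((-eta) ^ n / (n.factorial : ℂ)) *
        ∏ j ∈ Finset.Icc 1 n,
          ((l : ℂ) - (j : ℂ) + 1) * (2 * lam2 - ((k : ℂ) + (j : ℂ) - 1)) /
            (del2 - del1 + eta * (lam1 - lam2 +
              (((k : ℂ) + (n : ℂ)) - ((l : ℂ) - (n : ℂ)) - (j : ℂ)))))
    (fun n m => Mtcoef lam1 lam2 del1 del2 eta (k + n) (l - n) m)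
    (fun s hsl => KEY lam1 lam2 del1 del2 eta heta hg l k s hsl)).symm
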